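/- arXiv:1607.00050 — 5 statements merged into one kernel-verified Lean document; each statement's English description precedes it below -/
import Mathlib

section
/- Let n ≥ 2, β ∈ ℝ, and suppose A is a finite type and R : {−1,1} → A → ℝ satisfies e^{β·s·s'} = Σ_{a∈A} R(s,a)·R(s',a) for all s, s' ∈ {−1,1}. Define the vertex tensor T(a,b,c,d) = Σ_{s∈{−1,1}} R(s,a)·R(s,b)·R(s,c)·R(s,d). Then the full tensor network contraction Σ_{x : V×{1,2} → A} Π_{v∈V} T(x(v−e₁,1), x(v,1), x(v−e₂,2), x(v,2)) equals the Ising partition function Z_N(β) = Σ_{σ : V → {−1,1}} exp(−β·H_N(σ)). -/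
open Finset

/-- The spin values `{-1, 1}` as a (finite) subtype of `ℝ`. -/
abbrev Spin : Type := ({-1, 1} : Finset ℝ)

/-- Vertices of the 2D periodic `n × n` lattice. -/
abbrev V2 (n : ℕ) := ZMod n × ZMod n

/-- The 2D periodic Ising energy
`H_N(σ) = −Σ_v (σ_v σ_{v+e₁} + σ_v σ_{v+e₂})`. -/
noncomputable def H2 (n : ℕ) [NeZero n] (σ : V2 n → Spin) : ℝ :=
  -∑ v : V2 n, ((σ v : ℝ) * (σ (v + (1, 0)) : ℝ) + (σ v : ℝ) * (σ (v + (0, 1)) : ℝ))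

/-- If `R` splits the edge Boltzmann weight, `e^{β s s'} = Σ_a R(s,a) R(s',a)`, then the
contraction of the tensor network built from the vertex tensors
`T(a,b,c,d) = Σ_s R(s,a) R(s,b) R(s,c) R(s,d)` over all bond-index assignments
`x : V×{1,2} → A` equals the Ising partition function `Z_N(β)`. -/
theorem tensorNetwork_contraction_eq_partitionFunction
    (n : ℕ) [NeZero n] (hn : 2 ≤ n) (β : ℝ)
    (A : Type) [Fintype A] (R : Spin → A → ℝ)
    (hR : ∀ s s' : Spin, Real.exp (β * (s : ℝ) * (s' : ℝ)) = ∑ a : A, R s a * R s' a) :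
    ∑ x : V2 n × Fin 2 → A, ∏ v : V2 n,
        (∑ s : Spin, R s (x (v - (1, 0), 0)) * R s (x (v, 0)) *
          R s (x (v - (0, 1), 1)) * R s (x (v, 1)))
      = ∑ σ : V2 n → Spin, Real.exp (-β * H2 n σ) := by
  classical
  have key : ∀ σ : V2 n → Spin,
      (∑ x : V2 n × Fin 2 → A, ∏ v : V2 n,
        (R (σ v) (x (v - (1,0), 0)) * R (σ v) (x (v, 0)) *
          R (σ v) (x (v - (0,1), 1)) * R (σ v) (x (v, 1))))
      = Real.exp (-β * H2 n σ) := by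
    intro σ
    set e : Fin 2 → V2 n := fun k => if k = 0 then (1,0) else (0,1) with he
    have he0 : e 0 = (1,0) := by simp [he]
    have he1 : e 1 = (0,1) := by simp [he]
    have h1 : ∀ x : V2 n × Fin 2 → A,
        (∏ v : V2 n, (R (σ v) (x (v - (1,0), 0)) * R (σ v) (x (v, 0)) *
          R (σ v) (x (v - (0,1), 1)) * R (σ v) (x (v, 1))))
        = ∏ p : V2 n × Fin 2, (R (σ p.1) (x p) * R (σ (p.1 + e p.2)) (x p)) := by
      intro x
      have hrhs : (∏ p : V2 n × Fin 2, (R (σ p.1) (x p) * R (σ (p.1 + e p.2)) (x p)))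
          = ∏ v : V2 n, ((R (σ v) (x (v, 0)) * R (σ (v + (1,0))) (x (v, 0))) *
              (R (σ v) (x (v, 1)) * R (σ (v + (0,1))) (x (v, 1)))) := by
        rw [Fintype.prod_prod_type (f := fun p : V2 n × Fin 2 =>
          R (σ p.1) (x p) * R (σ (p.1 + e p.2)) (x p))]
        exact Finset.prod_congr rfl fun v _ => by
          rw [Fin.prod_univ_two]; simp only [he0, he1]
      rw [hrhs]
      have hsh : ∀ (c : V2 n) (k : Fin 2),
          (∏ v : V2 n, R (σ v) (x (v - c, k))) = ∏ v : V2 n, R (σ (v + c)) (x (v, k)) := by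
        intro c k
        exact Fintype.prod_equiv (Equiv.subRight c) _ _ (fun v => by simp)
      simp only [prod_mul_distrib, hsh]
      ring
    simp only [h1]
    have h2 : (∑ x : V2 n × Fin 2 → A,
        ∏ p : V2 n × Fin 2, (R (σ p.1) (x p) * R (σ (p.1 + e p.2)) (x p)))
        = ∏ p : V2 n × Fin 2, ∑ a : A, (R (σ p.1) a * R (σ (p.1 + e p.2)) a) := by
      rw [Finset.prod_univ_sum (fun _ => (univ : Finset A))
        (fun (p : V2 n × Fin 2) (a : A) => R (σ p.1) a * R (σ (p.1 + e p.2)) a),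
        Fintype.piFinset_univ]
    rw [h2]
    have h3 : ∀ p : V2 n × Fin 2,
        (∑ a : A, R (σ p.1) a * R (σ (p.1 + e p.2)) a)
        = Real.exp (β * (σ p.1 : ℝ) * (σ (p.1 + e p.2) : ℝ)) := (fun p => (hR _ _).symm)
    simp only [h3]
    rw [← Real.exp_sum]
    congr 1
    rw [H2, mul_neg, neg_mul, neg_neg, Finset.mul_sum,
      Fintype.sum_prod_type (f := fun p : V2 n × Fin 2 =>
        β * (σ p.1 : ℝ) * (σ (p.1 + e p.2) : ℝ))]
    exact Finset.sum_congr rfl fun v _ => by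
      rw [Fin.sum_univ_two]; simp only [he0, he1]; ring
  calc ∑ x : V2 n × Fin 2 → A, ∏ v : V2 n,
        (∑ s : Spin, R s (x (v - (1, 0), 0)) * R s (x (v, 0)) *
          R s (x (v - (0, 1), 1)) * R s (x (v, 1)))
      = ∑ x : V2 n × Fin 2 → A, ∑ σ : V2 n → Spin, ∏ v : V2 n,
          (R (σ v) (x (v - (1,0), 0)) * R (σ v) (x (v, 0)) *
            R (σ v) (x (v - (0,1), 1)) * R (σ v) (x (v, 1))) := by
        refine Finset.sum_congr rfl fun x _ => ?_
        rw [Finset.prod_univ_sum (fun _ => (univ : Finset Spin)), Fintype.piFinset_univ]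
    _ = ∑ σ : V2 n → Spin, ∑ x : V2 n × Fin 2 → A, ∏ v : V2 n,
          (R (σ v) (x (v - (1,0), 0)) * R (σ v) (x (v, 0)) *
            R (σ v) (x (v - (0,1), 1)) * R (σ v) (x (v, 1))) := Finset.sum_comm
    _ = ∑ σ : V2 n → Spin, Real.exp (-β * H2 n σ) := Finset.sum_congr rfl fun σ _ => key σ
end

section
/- Let n ≥ 2, β ∈ ℝ, and suppose A is a finite type and R : {−1,1} → A → ℝ satisfies e^{β·s·s'} = Σ_{a∈A} R(s,a)·R(s',a) for all s, s' ∈ {−1,1}. Define T(a,b,c,d) = Σ_{s∈{−1,1}} R(s,a)·R(s,b)·R(s,c)·R(s,d) and the impurity tensor T̃(a,b,c,d) = Σ_{s∈{−1,1}} s·R(s,a)·R(s,b)·R(s,c)·R(s,d). Then for any fixed site w ∈ V, the contraction of the network that places T̃ at vertex w and T at every other vertex equals the unnormalized magnetization: Σ_{x : V×{1,2} → A} T̃(x(w−e₁,1), x(w,1), x(w−e₂,2), x(w,2)) · Π_{v≠w} T(x(v−e₁,1), x(v,1), x(v−e₂,2), x(v,2)) = Σ_{σ : V → {−1,1}} σ_w·exp(−β·H_N(σ)).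 -/
open Finset

/-- The vertex tensor `T(a,b,c,d) = Σ_s R(s,a) R(s,b) R(s,c) R(s,d)`. -/
noncomputable def Tv (A : Type) [Fintype A] (R : Spin → A → ℝ) (a b c d : A) : ℝ :=
  ∑ s : Spin, R s a * R s b * R s c * R s d

/-- The impurity tensor `T̃(a,b,c,d) = Σ_s s · R(s,a) R(s,b) R(s,c) R(s,d)`. -/
noncomputable def Timp (A : Type) [Fintype A] (R : Spin → A → ℝ) (a b c d : A) : ℝ :=
  ∑ s : Spin, (s : ℝ) * (R s a * R s b * R s c * R s d)

/-- Impurity tensor method for the single-site magnetization: placing the impurity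
tensor `T̃` at the site `w` and the vertex tensor `T` everywhere else, the network
contraction equals the unnormalized magnetization `Σ_σ σ_w e^{−β H_N(σ)}`. -/
theorem impurity_network_eq_unnormalized_magnetization
    (n : ℕ) [NeZero n] (hn : 2 ≤ n) (β : ℝ)
    (A : Type) [Fintype A] (R : Spin → A → ℝ)
    (hR : ∀ s s' : Spin, Real.exp (β * (s : ℝ) * (s' : ℝ)) = ∑ a : A, R s a * R s' a)
    (w : V2 n) :
    ∑ x : V2 n × Fin 2 → A,
        Timp A R (x (w - (1, 0), 0)) (x (w, 0)) (x (w - (0, 1), 1)) (x (w, 1)) *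
        ∏ v ∈ Finset.univ.erase w,
          Tv A R (x (v - (1, 0), 0)) (x (v, 0)) (x (v - (0, 1), 1)) (x (v, 1))
      = ∑ σ : V2 n → Spin, (σ w : ℝ) * Real.exp (-β * H2 n σ) := by
  classical
  -- the per-vertex weight
  set P : (V2 n → Spin) → (V2 n × Fin 2 → A) → V2 n → ℝ :=
    fun σ x v => R (σ v) (x (v - (1, 0), 0)) * R (σ v) (x (v, 0)) *
                 R (σ v) (x (v - (0, 1), 1)) * R (σ v) (x (v, 1)) with hP
  have stepA : ∀ x : V2 n × Fin 2 → A,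
      Timp A R (x (w - (1, 0), 0)) (x (w, 0)) (x (w - (0, 1), 1)) (x (w, 1)) *
        ∏ v ∈ Finset.univ.erase w,
          Tv A R (x (v - (1, 0), 0)) (x (v, 0)) (x (v - (0, 1), 1)) (x (v, 1))
      = ∑ σ : V2 n → Spin, (σ w : ℝ) * ∏ v, P σ x v := by
    intro x
    have hg : Timp A R (x (w - (1, 0), 0)) (x (w, 0)) (x (w - (0, 1), 1)) (x (w, 1)) *
        ∏ v ∈ Finset.univ.erase w,
          Tv A R (x (v - (1, 0), 0)) (x (v, 0)) (x (v - (0, 1), 1)) (x (v, 1))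
        = ∏ v : V2 n, ∑ s : Spin, ((if v = w then (s : ℝ) else 1) *
            (R s (x (v - (1, 0), 0)) * R s (x (v, 0)) *
             R s (x (v - (0, 1), 1)) * R s (x (v, 1)))) := by
      rw [← Finset.mul_prod_erase Finset.univ _ (Finset.mem_univ w)]
      congr 1
      · simp [Timp]
      · apply Finset.prod_congr rfl
        intro v hv
        have hvw : v ≠ w := Finset.ne_of_mem_erase hv
        simp [Tv, hvw]
    rw [hg, Finset.prod_univ_sum, Fintype.piFinset_univ]
    apply Finset.sum_congr rfl
    intro σ _
    rw [Finset.prod_mul_distrib]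
    congr 1
    rw [Finset.prod_eq_single w (fun v _ hvw => by simp [hvw]) (fun h => absurd (Finset.mem_univ w) h)]
    simp
  have stepB : ∀ σ : V2 n → Spin,
      ∑ x : V2 n × Fin 2 → A, ∏ v, P σ x v = Real.exp (-β * H2 n σ) := by
    intro σ
    -- edge weight
    set h : V2 n × Fin 2 → A → ℝ :=
      fun p a => R (σ p.1) a * R (σ (p.1 + if p.2 = 0 then (1, 0) else (0, 1))) a with hh
    have regroup : ∀ x : V2 n × Fin 2 → A,
        ∏ v, P σ x v = ∏ p : V2 n × Fin 2, h p (x p) := by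
      intro x
      have e1 : (∏ v : V2 n, R (σ v) (x (v - (1, 0), 0)))
          = ∏ v : V2 n, R (σ (v + (1, 0))) (x (v, 0)) :=
        (Fintype.prod_equiv (Equiv.addRight ((1, 0) : V2 n))
          (fun v => R (σ (v + (1, 0))) (x (v, 0)))
          (fun v => R (σ v) (x (v - (1, 0), 0)))
          (fun v => by simp)).symm
      have e2 : (∏ v : V2 n, R (σ v) (x (v - (0, 1), 1)))
          = ∏ v : V2 n, R (σ (v + (0, 1))) (x (v, 1)) :=
        (Fintype.prod_equiv (Equiv.addRight ((0, 1) : V2 n))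
          (fun v => R (σ (v + (0, 1))) (x (v, 1)))
          (fun v => R (σ v) (x (v - (0, 1), 1)))
          (fun v => by simp)).symm
      have split : (∏ p : V2 n × Fin 2, h p (x p))
          = ∏ v : V2 n, ∏ k : Fin 2, h (v, k) (x (v, k)) :=
        Fintype.prod_prod_type (f := fun p => h p (x p))
      rw [split, hP]
      simp only [Fin.prod_univ_two, hh]
      norm_num
      simp only [Finset.prod_mul_distrib, e1, e2]
      ring
    calc ∑ x : V2 n × Fin 2 → A, ∏ v, P σ x v
        = ∑ x : V2 n × Fin 2 → A, ∏ p, h p (x p) := by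
          exact Finset.sum_congr rfl fun x _ => regroup x
      _ = ∏ p : V2 n × Fin 2, ∑ a : A, h p a := by
          rw [Finset.prod_univ_sum, Fintype.piFinset_univ]
      _ = ∏ p : V2 n × Fin 2,
            Real.exp (β * (σ p.1 : ℝ) *
              (σ (p.1 + if p.2 = 0 then (1, 0) else (0, 1)) : ℝ)) := by
          exact Finset.prod_congr rfl fun p _ => (hR _ _).symm
      _ = Real.exp (-β * H2 n σ) := by
          rw [← Real.exp_sum]
          congr 1
          rw [H2, Fintype.sum_prod_type]
          simp only [Fin.sum_univ_two]
          norm_num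
          rw [Finset.mul_sum]
          apply Finset.sum_congr rfl
          intro v _
          ring
  calc ∑ x : V2 n × Fin 2 → A,
        Timp A R (x (w - (1, 0), 0)) (x (w, 0)) (x (w - (0, 1), 1)) (x (w, 1)) *
        ∏ v ∈ Finset.univ.erase w,
          Tv A R (x (v - (1, 0), 0)) (x (v, 0)) (x (v - (0, 1), 1)) (x (v, 1))
      = ∑ x : V2 n × Fin 2 → A, ∑ σ : V2 n → Spin, (σ w : ℝ) * ∏ v, P σ x v := by
        exact Finset.sum_congr rfl fun x _ => stepA x
    _ = ∑ σ : V2 n → Spin, ∑ x : V2 n × Fin 2 → A, (σ w : ℝ) * ∏ v, P σ x v :=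
        Finset.sum_comm
    _ = ∑ σ : V2 n → Spin, (σ w : ℝ) * Real.exp (-β * H2 n σ) := by
        apply Finset.sum_congr rfl
        intro σ _
        rw [← Finset.mul_sum, stepB σ]
end

section
/- Let n ≥ 2, β ∈ ℝ, and suppose A is a finite type and R : {−1,1} → A → ℝ satisfies e^{β·s·s'} = Σ_{a∈A} R(s,a)·R(s',a) for all s, s' ∈ {−1,1}. Define T(a,b,c,d) = Σ_{s∈{−1,1}} R(s,a)·R(s,b)·R(s,c)·R(s,d) and the impurity tensor T̃(a,b,c,d) = Σ_{s∈{−1,1}} s·R(s,a)·R(s,b)·R(s,c)·R(s,d). Then for any fixed site w ∈ V, the contraction of the network that places T̃ at the two adjacent vertices w and w+e₁ and T at every other vertex equals the unnormalized edge correlation: Σ_{x : V×{1,2} → A} Π_{v ∈ {w, w+e₁}} T̃(x(v−e₁,1), x(v,1), x(v−e₂,2), x(v,2)) · Π_{v ∉ {w, w+e₁}} T(x(v−e₁,1), x(v,1), x(v−e₂,2), x(v,2)) = Σ_{σ : V → {−1,1}} σ_w·σ_{w+e₁}·exp(−β·H_N(σ)). -/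
open Finset

/-- Reindexing a product over the torus by a translation. -/
lemma reindex_prod (n : ℕ) [NeZero n] (f : V2 n → V2 n → ℝ) (c : V2 n) :
    ∏ v : V2 n, f (v + c) v = ∏ v : V2 n, f v (v - c) :=
  Fintype.prod_equiv (Equiv.addRight c) _ _ (fun v => by simp)

/-- The direction of the edge `(v, k)`. -/
def dir (n : ℕ) (k : Fin 2) : V2 n := if k = 0 then (1, 0) else (0, 1)

/-- Refactoring the per-vertex product of four `R`-factors as a product over edges. -/
lemma edge_prod (n : ℕ) [NeZero n] (A : Type) [Fintype A] (R : Spin → A → ℝ)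
    (σ : V2 n → Spin) (x : V2 n × Fin 2 → A) :
    (∏ v : V2 n, (R (σ v) (x (v - (1, 0), 0)) * R (σ v) (x (v, 0)) *
        R (σ v) (x (v - (0, 1), 1)) * R (σ v) (x (v, 1))))
    = ∏ p : V2 n × Fin 2,
        (R (σ p.1) (x p) * R (σ (p.1 + dir n p.2)) (x p)) := by
  rw [Fintype.prod_prod_type (f := fun p : V2 n × Fin 2 =>
    R (σ p.1) (x p) * R (σ (p.1 + dir n p.2)) (x p))]
  have h1 : ∀ v : V2 n,
      (∏ k : Fin 2, R (σ v) (x (v, k)) * R (σ (v + dir n k)) (x (v, k)))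
      = (R (σ v) (x (v, 0)) * R (σ (v + (1, 0))) (x (v, 0))) *
        (R (σ v) (x (v, 1)) * R (σ (v + (0, 1))) (x (v, 1))) := by
    intro v
    rw [Fin.prod_univ_two]
    simp [dir]
  simp only [h1]
  simp only [Finset.prod_mul_distrib]
  have h2 : (∏ v : V2 n, R (σ (v + ((1 : ZMod n), (0 : ZMod n)))) (x (v, 0)))
      = ∏ v : V2 n, R (σ v) (x (v - (1, 0), 0)) :=
    reindex_prod n (fun a b => R (σ a) (x (b, 0))) (1, 0)
  have h3 : (∏ v : V2 n, R (σ (v + ((0 : ZMod n), (1 : ZMod n)))) (x (v, 1)))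
      = ∏ v : V2 n, R (σ v) (x (v - (0, 1), 1)) :=
    reindex_prod n (fun a b => R (σ a) (x (b, 1))) (0, 1)
  rw [h2, h3]
  ring

/-- The Boltzmann weight as a product over edges. -/
lemma exp_H2_eq_prod (n : ℕ) [NeZero n] (β : ℝ) (σ : V2 n → Spin) :
    Real.exp (-β * H2 n σ)
    = ∏ p : V2 n × Fin 2,
        Real.exp (β * (σ p.1 : ℝ) * (σ (p.1 + dir n p.2) : ℝ)) := by
  rw [← Real.exp_sum]
  congr 1
  rw [Fintype.sum_prod_type (f := fun p : V2 n × Fin 2 =>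
    β * (σ p.1 : ℝ) * (σ (p.1 + dir n p.2) : ℝ))]
  simp only [Fin.sum_univ_two]
  simp only [H2, mul_neg, neg_neg, Finset.mul_sum, ← Finset.sum_neg_distrib]
  refine Finset.sum_congr rfl fun v _ => ?_
  have hd0 : dir n 0 = ((1 : ZMod n), (0 : ZMod n)) := rfl
  have hd1 : dir n 1 = ((0 : ZMod n), (1 : ZMod n)) := rfl
  rw [hd0, hd1]
  ring

/-- Impurity tensor method for the nearest-neighbor correlation: placing the impurity
tensor `T̃` at the two adjacent sites `w` and `w + e₁` and the vertex tensor `T`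
everywhere else, the network contraction equals the unnormalized edge correlation
`Σ_σ σ_w σ_{w+e₁} e^{−β H_N(σ)}`. -/
theorem impurity_network_eq_unnormalized_correlation
    (n : ℕ) [NeZero n] (hn : 2 ≤ n) (β : ℝ)
    (A : Type) [Fintype A] (R : Spin → A → ℝ)
    (hR : ∀ s s' : Spin, Real.exp (β * (s : ℝ) * (s' : ℝ)) = ∑ a : A, R s a * R s' a)
    (w : V2 n) :
    ∑ x : V2 n × Fin 2 → A,
        (∏ v ∈ ({w, w + (1, 0)} : Finset (V2 n)),
          Timp A R (x (v - (1, 0), 0)) (x (v, 0)) (x (v - (0, 1), 1)) (x (v, 1))) *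
        ∏ v ∈ Finset.univ \ ({w, w + (1, 0)} : Finset (V2 n)),
          Tv A R (x (v - (1, 0), 0)) (x (v, 0)) (x (v - (0, 1), 1)) (x (v, 1))
      = ∑ σ : V2 n → Spin, (σ w : ℝ) * (σ (w + (1, 0)) : ℝ) * Real.exp (-β * H2 n σ) := by
  haveI : Fact (1 < n) := ⟨hn⟩
  have hne : w ≠ w + ((1 : ZMod n), (0 : ZMod n)) := by
    intro h
    have h0 : ((1 : ZMod n), (0 : ZMod n)) = (0 : V2 n) := (left_eq_add.mp h)
    exact one_ne_zero (congrArg Prod.fst h0)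
  set S : Finset (V2 n) := {w, w + (1, 0)} with hS
  -- step 1: merge the two partial products into a single product of sums over spins
  have step1 : ∀ x : V2 n × Fin 2 → A,
      (∏ v ∈ S, Timp A R (x (v - (1, 0), 0)) (x (v, 0)) (x (v - (0, 1), 1)) (x (v, 1))) *
        ∏ v ∈ Finset.univ \ S,
          Tv A R (x (v - (1, 0), 0)) (x (v, 0)) (x (v - (0, 1), 1)) (x (v, 1))
      = ∏ v : V2 n, ∑ s : Spin, (if v ∈ S then (s : ℝ) else 1) *
          (R s (x (v - (1, 0), 0)) * R s (x (v, 0)) * R s (x (v - (0, 1), 1)) * R s (x (v, 1))) := by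
    intro x
    have hsum : ∀ v : V2 n,
        (∑ s : Spin, (if v ∈ S then (s : ℝ) else 1) *
          (R s (x (v - (1, 0), 0)) * R s (x (v, 0)) * R s (x (v - (0, 1), 1)) * R s (x (v, 1))))
        = if v ∈ S then
            Timp A R (x (v - (1, 0), 0)) (x (v, 0)) (x (v - (0, 1), 1)) (x (v, 1))
          else
            Tv A R (x (v - (1, 0), 0)) (x (v, 0)) (x (v - (0, 1), 1)) (x (v, 1)) := by
      intro v
      split_ifs with h
      · simp [Timp]
      · simp [Tv, one_mul, mul_assoc]
    simp only [hsum]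
    rw [← Finset.prod_sdiff (Finset.subset_univ S), mul_comm]
    refine congrArg₂ (· * ·) ?_ ?_
    · exact Finset.prod_congr rfl fun v hv => (if_neg (Finset.mem_sdiff.mp hv).2).symm
    · exact Finset.prod_congr rfl fun v hv => (if_pos hv).symm
  -- step 6: for fixed σ, summing the per-vertex product over bond indices gives the weight
  have step6 : ∀ σ : V2 n → Spin,
      (∑ x : V2 n × Fin 2 → A, ∏ v : V2 n,
        (R (σ v) (x (v - (1, 0), 0)) * R (σ v) (x (v, 0)) *
          R (σ v) (x (v - (0, 1), 1)) * R (σ v) (x (v, 1))))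
      = Real.exp (-β * H2 n σ) := by
    intro σ
    have h1 : ∀ x : V2 n × Fin 2 → A,
        (∏ v : V2 n, (R (σ v) (x (v - (1, 0), 0)) * R (σ v) (x (v, 0)) *
          R (σ v) (x (v - (0, 1), 1)) * R (σ v) (x (v, 1))))
        = ∏ p : V2 n × Fin 2, (R (σ p.1) (x p) * R (σ (p.1 + dir n p.2)) (x p)) :=
      fun x => edge_prod n A R σ x
    simp only [h1]
    have h2 := Finset.prod_univ_sum (fun _ : V2 n × Fin 2 => (Finset.univ : Finset A))
      (fun p a => R (σ p.1) a * R (σ (p.1 + dir n p.2)) a)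
    rw [Fintype.piFinset_univ] at h2
    rw [← h2, exp_H2_eq_prod n β σ]
    exact Finset.prod_congr rfl fun p _ => (hR _ _).symm
  calc
    ∑ x : V2 n × Fin 2 → A,
        (∏ v ∈ S, Timp A R (x (v - (1, 0), 0)) (x (v, 0)) (x (v - (0, 1), 1)) (x (v, 1))) *
        ∏ v ∈ Finset.univ \ S,
          Tv A R (x (v - (1, 0), 0)) (x (v, 0)) (x (v - (0, 1), 1)) (x (v, 1))
      = ∑ x : V2 n × Fin 2 → A, ∏ v : V2 n, ∑ s : Spin, (if v ∈ S then (s : ℝ) else 1) *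
          (R s (x (v - (1, 0), 0)) * R s (x (v, 0)) * R s (x (v - (0, 1), 1)) * R s (x (v, 1))) :=
        Finset.sum_congr rfl fun x _ => step1 x
    _ = ∑ x : V2 n × Fin 2 → A, ∑ σ : V2 n → Spin, ∏ v : V2 n,
          ((if v ∈ S then (σ v : ℝ) else 1) *
            (R (σ v) (x (v - (1, 0), 0)) * R (σ v) (x (v, 0)) *
              R (σ v) (x (v - (0, 1), 1)) * R (σ v) (x (v, 1)))) := by
        refine Finset.sum_congr rfl fun x _ => ?_
        have h := Finset.prod_univ_sum (fun _ : V2 n => (Finset.univ : Finset Spin))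
          (fun v s => (if v ∈ S then (s : ℝ) else 1) *
            (R s (x (v - (1, 0), 0)) * R s (x (v, 0)) *
              R s (x (v - (0, 1), 1)) * R s (x (v, 1))))
        rw [Fintype.piFinset_univ] at h
        exact h
    _ = ∑ σ : V2 n → Spin, ∑ x : V2 n × Fin 2 → A, ∏ v : V2 n,
          ((if v ∈ S then (σ v : ℝ) else 1) *
            (R (σ v) (x (v - (1, 0), 0)) * R (σ v) (x (v, 0)) *
              R (σ v) (x (v - (0, 1), 1)) * R (σ v) (x (v, 1)))) := Finset.sum_comm
    _ = ∑ σ : V2 n → Spin, ∑ x : V2 n × Fin 2 → A,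
          ((σ w : ℝ) * (σ (w + (1, 0)) : ℝ)) * ∏ v : V2 n,
            (R (σ v) (x (v - (1, 0), 0)) * R (σ v) (x (v, 0)) *
              R (σ v) (x (v - (0, 1), 1)) * R (σ v) (x (v, 1))) := by
        refine Finset.sum_congr rfl fun σ _ => Finset.sum_congr rfl fun x _ => ?_
        rw [Finset.prod_mul_distrib, Finset.prod_ite_mem, Finset.univ_inter, hS,
          Finset.prod_pair hne]
    _ = ∑ σ : V2 n → Spin, ((σ w : ℝ) * (σ (w + (1, 0)) : ℝ)) * Real.exp (-β * H2 n σ) := by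
        refine Finset.sum_congr rfl fun σ _ => ?_
        rw [← Finset.mul_sum, step6 σ]
    _ = ∑ σ : V2 n → Spin, (σ w : ℝ) * (σ (w + (1, 0)) : ℝ) * Real.exp (-β * H2 n σ) := rfl
end

section
/- Let n ≥ 2, β, B ∈ ℝ, and suppose A is a finite type and R : {−1,1} → A → ℝ satisfies e^{β·s·s'} = Σ_{a∈A} R(s,a)·R(s',a) for all s, s' ∈ {−1,1}. Define the field-dressed vertex tensor T_B(a,b,c,d) = Σ_{s∈{−1,1}} e^{β·B·s}·R(s,a)·R(s,b)·R(s,c)·R(s,d). Then Σ_{x : V×{1,2} → A} Π_{v∈V} T_B(x(v−e₁,1), x(v,1), x(v−e₂,2), x(v,2)) = Z_{N,B}(β), the partition function of the periodic Ising model with external field B. -/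
open Finset

/-- The perturbed 2D periodic Ising energy with external field `B`:
`H_{N,B}(σ) = −(Σ_v (σ_v σ_{v+e₁} + σ_v σ_{v+e₂}) + B Σ_v σ_v)`. -/
noncomputable def H2B (n : ℕ) [NeZero n] (B : ℝ) (σ : V2 n → Spin) : ℝ :=
  -((∑ v : V2 n, ((σ v : ℝ) * (σ (v + (1, 0)) : ℝ) + (σ v : ℝ) * (σ (v + (0, 1)) : ℝ)))
    + B * ∑ v : V2 n, (σ v : ℝ))

/-- The field-dressed vertex tensor
`T_B(a,b,c,d) = Σ_s e^{β B s} R(s,a) R(s,b) R(s,c) R(s,d)`. -/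
noncomputable def TvB (A : Type) [Fintype A] (β B : ℝ) (R : Spin → A → ℝ)
    (a b c d : A) : ℝ :=
  ∑ s : Spin, Real.exp (β * B * (s : ℝ)) * (R s a * R s b * R s c * R s d)

/-- The tensor network built from field-dressed vertex tensors contracts to the
partition function `Z_{N,B}(β)` of the periodic Ising model with external field `B`. -/
theorem field_network_eq_perturbed_partitionFunction
    (n : ℕ) [NeZero n] (hn : 2 ≤ n) (β B : ℝ)
    (A : Type) [Fintype A] (R : Spin → A → ℝ)
    (hR : ∀ s s' : Spin, Real.exp (β * (s : ℝ) * (s' : ℝ)) = ∑ a : A, R s a * R s' a) :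
    ∑ x : V2 n × Fin 2 → A, ∏ v : V2 n,
        TvB A β B R (x (v - (1, 0), 0)) (x (v, 0)) (x (v - (0, 1), 1)) (x (v, 1))
      = ∑ σ : V2 n → Spin, Real.exp (-β * H2B n B σ) := by
  classical
  -- Step 1: RHS per-σ expansion
  have hRHS : ∀ σ : V2 n → Spin, Real.exp (-β * H2B n B σ)
      = ∏ v : V2 n,
          ((∑ a : A, R (σ v) a * R (σ (v + (1, 0))) a)
            * (∑ a : A, R (σ v) a * R (σ (v + (0, 1))) a)
            * Real.exp (β * B * (σ v : ℝ))) := by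
    intro σ
    have h1 : -β * H2B n B σ
        = ∑ v : V2 n, (β * (σ v : ℝ) * (σ (v + (1, 0)) : ℝ)
            + β * (σ v : ℝ) * (σ (v + (0, 1)) : ℝ) + β * B * (σ v : ℝ)) := by
      simp only [H2B, Finset.sum_add_distrib, Finset.mul_sum, neg_mul_neg, mul_add,
        mul_assoc]
    rw [h1, Real.exp_sum]
    refine Finset.prod_congr rfl fun v _ => ?_
    rw [Real.exp_add, Real.exp_add, hR, hR]
  -- Step 2: expand each TvB product as a sum over spin configurations
  have hTv : ∀ (x : V2 n × Fin 2 → A),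
      (∏ v : V2 n, TvB A β B R (x (v - (1, 0), 0)) (x (v, 0)) (x (v - (0, 1), 1)) (x (v, 1)))
      = ∑ σ : V2 n → Spin, ∏ v : V2 n,
          Real.exp (β * B * ((σ v : ℝ)))
            * (R (σ v) (x (v - (1, 0), 0)) * R (σ v) (x (v, 0))
              * R (σ v) (x (v - (0, 1), 1)) * R (σ v) (x (v, 1))) := by
    intro x
    simp only [TvB]
    rw [Finset.prod_univ_sum, Fintype.piFinset_univ]
  calc
    ∑ x : V2 n × Fin 2 → A, ∏ v : V2 n,
        TvB A β B R (x (v - (1, 0), 0)) (x (v, 0)) (x (v - (0, 1), 1)) (x (v, 1))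
      = ∑ σ : V2 n → Spin, ∑ x : V2 n × Fin 2 → A, ∏ v : V2 n,
          Real.exp (β * B * ((σ v : ℝ)))
            * (R (σ v) (x (v - (1, 0), 0)) * R (σ v) (x (v, 0))
              * R (σ v) (x (v - (0, 1), 1)) * R (σ v) (x (v, 1))) := by
        simp only [hTv]; exact Finset.sum_comm
    _ = ∑ σ : V2 n → Spin, Real.exp (-β * H2B n B σ) := by
        refine Finset.sum_congr rfl fun σ _ => ?_
        rw [hRHS σ]
        -- fixed σ: factor and contract over x
        set F : V2 n × Fin 2 → A → ℝ := fun p a =>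
          R (σ (p.1 + (if p.2 = 0 then ((1, 0) : V2 n) else (0, 1)))) a * R (σ p.1) a with hF
        have hx : ∀ x : V2 n × Fin 2 → A,
            (∏ v : V2 n, Real.exp (β * B * ((σ v : ℝ)))
              * (R (σ v) (x (v - (1, 0), 0)) * R (σ v) (x (v, 0))
                * R (σ v) (x (v - (0, 1), 1)) * R (σ v) (x (v, 1))))
            = (∏ v : V2 n, Real.exp (β * B * ((σ v : ℝ))))
              * ∏ p : V2 n × Fin 2, F p (x p) := by
          intro x
          rw [Finset.prod_mul_distrib]
          congr 1
          have e1 : (∏ v : V2 n, R (σ v) (x (v - (1, 0), 0)))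
              = ∏ v : V2 n, R (σ (v + (1, 0))) (x (v, 0)) := by
            rw [← Equiv.prod_comp (Equiv.addRight ((1, 0) : V2 n))
              (fun v => R (σ v) (x (v - (1, 0), 0)))]
            simp
          have e2 : (∏ v : V2 n, R (σ v) (x (v - (0, 1), 1)))
              = ∏ v : V2 n, R (σ (v + (0, 1))) (x (v, 1)) := by
            rw [← Equiv.prod_comp (Equiv.addRight ((0, 1) : V2 n))
              (fun v => R (σ v) (x (v - (0, 1), 1)))]
            simp
          have hsplit0 : (∏ p : V2 n × Fin 2, F p (x p))
              = ∏ v : V2 n, (F (v, 0) (x (v, 0)) * F (v, 1) (x (v, 1))) := by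
            rw [Fintype.prod_prod_type (f := fun p : V2 n × Fin 2 => F p (x p))]
            exact Finset.prod_congr rfl fun v _ => Fin.prod_univ_two _
          rw [hsplit0]
          simp only [hF]
          norm_num
          simp only [Finset.prod_mul_distrib, e1, e2]
          ring
        simp only [hx, ← Finset.mul_sum]
        rw [← Fintype.piFinset_univ, ← Finset.prod_univ_sum]
        have hsplit : (∏ p : V2 n × Fin 2, ∑ a : A, F p a)
            = ∏ v : V2 n, ((∑ a : A, F (v, 0) a) * (∑ a : A, F (v, 1) a)) := by
          rw [Fintype.prod_prod_type (f := fun p : V2 n × Fin 2 => ∑ a : A, F p a)]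
          exact Finset.prod_congr rfl fun v _ => Fin.prod_univ_two _
        rw [hsplit, ← Finset.prod_mul_distrib]
        refine Finset.prod_congr rfl fun v _ => ?_
        simp only [hF]
        norm_num
        rw [Finset.sum_congr rfl (fun a _ => mul_comm (R (σ (v + (1,0))) a) (R (σ v) a)),
          Finset.sum_congr rfl (fun a _ => mul_comm (R (σ (v + (0,1))) a) (R (σ v) a))]
        ring
end

section
/- Let n ≥ 2, β ∈ ℝ, and suppose A is a finite type and R : {−1,1} → A → ℝ satisfies e^{β·s·s'} = Σ_{a∈A} R(s,a)·R(s',a) for all s, s' ∈ {−1,1}. Define the 6-leg vertex tensor T(a,b,c,d,e,f) = Σ_{s∈{−1,1}} R(s,a)·R(s,b)·R(s,c)·R(s,d)·R(s,e)·R(s,f). Then the contraction Σ_{x : V×{1,2,3} → A} Π_{v∈V} T(x(v−e₁,1), x(v,1), x(v−e₂,2), x(v,2), x(v−e₃,3), x(v,3)) equals the 3D Ising partition function Z_N(β) = Σ_{σ : V → {−1,1}} exp(−β·H_N(σ)). -/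
open Finset

/-- Vertices of the 3D periodic `n × n × n` lattice. -/
abbrev V3 (n : ℕ) := ZMod n × ZMod n × ZMod n

/-- The 3D periodic Ising energy
`H_N(σ) = −Σ_v (σ_v σ_{v+e₁} + σ_v σ_{v+e₂} + σ_v σ_{v+e₃})`. -/
noncomputable def H3 (n : ℕ) [NeZero n] (σ : V3 n → Spin) : ℝ :=
  -∑ v : V3 n, ((σ v : ℝ) * (σ (v + (1, 0, 0)) : ℝ) + (σ v : ℝ) * (σ (v + (0, 1, 0)) : ℝ)
    + (σ v : ℝ) * (σ (v + (0, 0, 1)) : ℝ))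

/-- The 6-leg vertex tensor
`T(a,b,c,d,e,f) = Σ_s R(s,a) R(s,b) R(s,c) R(s,d) R(s,e) R(s,f)`. -/
noncomputable def Tv6 (A : Type) [Fintype A] (R : Spin → A → ℝ) (a b c d e f : A) : ℝ :=
  ∑ s : Spin, R s a * R s b * R s c * R s d * R s e * R s f

private def e3 (n : ℕ) : Fin 3 → V3 n := ![(1, 0, 0), (0, 1, 0), (0, 0, 1)]


set_option maxHeartbeats 2000000 in
/-- If `R` splits the edge Boltzmann weight, then the contraction of the 3D tensor
network built from the 6-leg vertex tensors equals the 3D Ising partition function. -/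
theorem tensorNetwork3D_contraction_eq_partitionFunction
    (n : ℕ) [NeZero n] (hn : 2 ≤ n) (β : ℝ)
    (A : Type) [Fintype A] (R : Spin → A → ℝ)
    (hR : ∀ s s' : Spin, Real.exp (β * (s : ℝ) * (s' : ℝ)) = ∑ a : A, R s a * R s' a) :
    ∑ x : V3 n × Fin 3 → A, ∏ v : V3 n,
        Tv6 A R (x (v - (1, 0, 0), 0)) (x (v, 0)) (x (v - (0, 1, 0), 1)) (x (v, 1))
          (x (v - (0, 0, 1), 2)) (x (v, 2))
      = ∑ σ : V3 n → Spin, Real.exp (-β * H3 n σ) := by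
  classical
  -- per-vertex weight for fixed bond assignment x
  have step3 : ∀ x : V3 n × Fin 3 → A,
      ∏ v : V3 n, Tv6 A R (x (v - (1, 0, 0), 0)) (x (v, 0)) (x (v - (0, 1, 0), 1)) (x (v, 1))
          (x (v - (0, 0, 1), 2)) (x (v, 2))
      = ∑ σ : V3 n → Spin, ∏ p : V3 n × Fin 3,
          (R (σ p.1) (x p) * R (σ (p.1 + e3 n p.2)) (x p)) := by
    intro x
    have h1 : ∀ v : V3 n, Tv6 A R (x (v - (1, 0, 0), 0)) (x (v, 0)) (x (v - (0, 1, 0), 1))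
        (x (v, 1)) (x (v - (0, 0, 1), 2)) (x (v, 2))
        = ∑ s : Spin, ∏ k : Fin 3, (R s (x (v, k)) * R s (x (v - e3 n k, k))) := by
      intro v
      unfold Tv6
      refine Finset.sum_congr rfl fun s _ => ?_
      rw [Fin.prod_univ_three]
      simp only [e3, Matrix.cons_val_zero, Matrix.cons_val_one, Matrix.head_cons,
        Matrix.cons_val_two, Matrix.tail_cons]
      ring
    calc
      ∏ v : V3 n, Tv6 A R (x (v - (1, 0, 0), 0)) (x (v, 0)) (x (v - (0, 1, 0), 1)) (x (v, 1))
          (x (v - (0, 0, 1), 2)) (x (v, 2))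
          = ∏ v : V3 n, ∑ s : Spin, ∏ k : Fin 3, (R s (x (v, k)) * R s (x (v - e3 n k, k))) := by
            exact Finset.prod_congr rfl fun v _ => h1 v
      _ = ∑ σ : V3 n → Spin, ∏ v : V3 n, ∏ k : Fin 3,
            (R (σ v) (x (v, k)) * R (σ v) (x (v - e3 n k, k))) := by
            rw [Fintype.prod_sum]
      _ = ∑ σ : V3 n → Spin, ∏ p : V3 n × Fin 3,
            (R (σ p.1) (x p) * R (σ (p.1 + e3 n p.2)) (x p)) := by
            refine Finset.sum_congr rfl fun σ _ => ?_
            symm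
            let φ : V3 n × Fin 3 ≃ V3 n × Fin 3 :=
              { toFun := fun p => (p.1 + e3 n p.2, p.2)
                invFun := fun p => (p.1 - e3 n p.2, p.2)
                left_inv := fun p => by simp
                right_inv := fun p => by simp }
            calc
              ∏ p : V3 n × Fin 3, (R (σ p.1) (x p) * R (σ (p.1 + e3 n p.2)) (x p))
                  = (∏ p : V3 n × Fin 3, R (σ p.1) (x p)) *
                    ∏ p : V3 n × Fin 3, R (σ (p.1 + e3 n p.2)) (x p) :=
                Finset.prod_mul_distrib
              _ = (∏ p : V3 n × Fin 3, R (σ p.1) (x p)) *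
                    ∏ p : V3 n × Fin 3, R (σ p.1) (x (p.1 - e3 n p.2, p.2)) := by
                congr 1
                rw [← Equiv.prod_comp φ
                  (fun p : V3 n × Fin 3 => R (σ p.1) (x (p.1 - e3 n p.2, p.2)))]
                exact Finset.prod_congr rfl fun p _ => by simp [φ]
              _ = ∏ p : V3 n × Fin 3,
                    (R (σ p.1) (x p) * R (σ p.1) (x (p.1 - e3 n p.2, p.2))) :=
                Finset.prod_mul_distrib.symm
              _ = ∏ v : V3 n, ∏ k : Fin 3,
                    (R (σ v) (x (v, k)) * R (σ v) (x (v - e3 n k, k))) :=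
                Fintype.prod_prod_type
                  (fun p : V3 n × Fin 3 => R (σ p.1) (x p) * R (σ p.1) (x (p.1 - e3 n p.2, p.2)))
  -- the RHS summand as a product over (vertex, direction) pairs
  have hRHS : ∀ σ : V3 n → Spin, Real.exp (-β * H3 n σ)
      = ∏ p : V3 n × Fin 3, ∑ a : A, R (σ p.1) a * R (σ (p.1 + e3 n p.2)) a := by
    intro σ
    have h1 : -β * H3 n σ = ∑ p : V3 n × Fin 3,
        β * (σ p.1 : ℝ) * (σ (p.1 + e3 n p.2) : ℝ) := by
      rw [Fintype.sum_prod_type]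
      simp only [H3, Fin.sum_univ_three, e3, Matrix.cons_val_zero, Matrix.cons_val_one,
        Matrix.head_cons, Matrix.cons_val_two, Matrix.tail_cons]
      rw [mul_neg, neg_mul, neg_neg, Finset.mul_sum]
      exact Finset.sum_congr rfl fun v _ => by ring
    rw [h1, Real.exp_sum]
    exact Finset.prod_congr rfl fun p _ => hR _ _
  calc
    ∑ x : V3 n × Fin 3 → A, ∏ v : V3 n,
        Tv6 A R (x (v - (1, 0, 0), 0)) (x (v, 0)) (x (v - (0, 1, 0), 1)) (x (v, 1))
          (x (v - (0, 0, 1), 2)) (x (v, 2))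
        = ∑ x : V3 n × Fin 3 → A, ∑ σ : V3 n → Spin, ∏ p : V3 n × Fin 3,
            (R (σ p.1) (x p) * R (σ (p.1 + e3 n p.2)) (x p)) := by
          exact Finset.sum_congr rfl fun x _ => step3 x
    _ = ∑ σ : V3 n → Spin, ∑ x : V3 n × Fin 3 → A, ∏ p : V3 n × Fin 3,
            (R (σ p.1) (x p) * R (σ (p.1 + e3 n p.2)) (x p)) := by rw [Finset.sum_comm]
    _ = ∑ σ : V3 n → Spin, ∏ p : V3 n × Fin 3, ∑ a : A,
            (R (σ p.1) a * R (σ (p.1 + e3 n p.2)) a) := by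
          exact Finset.sum_congr rfl fun σ _ =>
            (Fintype.prod_sum (κ := fun _ : V3 n × Fin 3 => A)
              (fun p a => R (σ p.1) a * R (σ (p.1 + e3 n p.2)) a)).symm
    _ = ∑ σ : V3 n → Spin, Real.exp (-β * H3 n σ) := by
          exact Finset.sum_congr rfl fun σ _ => (hRHS σ).symm
end
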